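/- Let C be a signed graph on m ≥ 3 vertices whose underlying graph is a cycle of length m (so its edges form a single chordless cycle), and suppose C has an even number of dotted edges. Then the quadratic form q_C is not positive definite; in fact there exists a nonzero vector z ∈ ℤ^m with q_C(z) = 0. -/

import Mathlib

open Finset

/-- A sign matrix encodes a signed graph: `a i j = 1` if `{i,j}` is a dotted edge,
`a i j = -1` if `{i,j}` is a solid edge, and `a i j = 0` if there is no edge. -/
def IsSignMatrix {n : ℕ} (a : Fin n → Fin n → ℤ) : Prop :=
  (∀ i j, a j i = a i j) ∧ (∀ i, a i i = 0) ∧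
    (∀ i j, a i j = -1 ∨ a i j = 0 ∨ a i j = 1)

/-- The quadratic form of a signed graph with sign matrix `a`:
`q(x) = Σ_i x_i² + Σ_{i<j} a_{ij} x_i x_j`. -/
def sgnForm {n : ℕ} (a : Fin n → Fin n → ℤ) (x : Fin n → ℤ) : ℤ :=
  (∑ i, x i ^ 2) + ∑ i, ∑ j, if i < j then a i j * (x i * x j) else 0

/-- The number of dotted edges of the cycle parametrized by `c`. -/
def dottedCount {n m : ℕ} (a : Fin n → Fin n → ℤ) (c : Fin (m + 3) → Fin n) : ℕ :=
  (Finset.univ.filter fun k : Fin (m + 3) => a (c k) (c (k + 1)) = 1).card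

open Fin.NatCast in
/-- a signed graph on `m + 3 ≥ 3` vertices whose underlying graph is a
cycle through all the vertices (adjacency holds exactly between cyclically consecutive
vertices) and which has an even number of dotted edges has a nonzero isotropic vector;
in particular its quadratic form is not positive definite. -/
theorem cycle_even_dotted_not_posDef {m : ℕ}
    (a : Fin (m + 3) → Fin (m + 3) → ℤ) (ha : IsSignMatrix a)
    (c : Fin (m + 3) → Fin (m + 3)) (hc : Function.Bijective c)
    (hcyc : ∀ k l : Fin (m + 3), a (c k) (c l) ≠ 0 ↔ (l = k + 1 ∨ k = l + 1))
    (heven : Even (dottedCount a c)) :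
    (¬ ∀ x : Fin (m + 3) → ℤ, x ≠ 0 → 0 < sgnForm a x) ∧
      ∃ z : Fin (m + 3) → ℤ, z ≠ 0 ∧ sgnForm a z = 0 := by
  classical
  obtain ⟨hsymm, hdiag, hval⟩ := ha
  -- the sign of the k-th cycle edge
  set S : Fin (m+3) → ℤ := fun k => a (c k) (c (k+1)) with hSdef
  have hS : ∀ k, S k = 1 ∨ S k = -1 := by
    intro k
    have hne : S k ≠ 0 := (hcyc k (k+1)).mpr (Or.inl rfl)
    rcases hval (c k) (c (k+1)) with h | h | h
    · right; exact h
    · exact absurd h hne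
    · left; exact h
  have hS2 : ∀ k, S k * S k = 1 := by
    intro k; rcases hS k with h | h <;> rw [h] <;> ring
  -- the alternating-sign vector along the cycle
  set f : Fin (m+3) → ℤ := fun k => ∏ j ∈ Finset.range k.val, (-(S j)) with hfdef
  have hf2 : ∀ k, f k * f k = 1 := by
    intro k
    simp only [hfdef]
    rw [← Finset.prod_mul_distrib]
    exact Finset.prod_eq_one fun j _ => by rw [neg_mul_neg]; exact hS2 _
  -- the product of all the (negated) signs is 1, by the even-dotted hypothesis
  have hprodall : ∏ k : Fin (m+3), (-(S k)) = 1 := by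
    rw [← Finset.prod_filter_mul_prod_filter_not Finset.univ (fun k => S k = 1)]
    have h1 : ∏ k ∈ Finset.univ.filter (fun k => S k = 1), (-(S k)) = (-1 : ℤ)^(dottedCount a c) := by
      rw [Finset.prod_congr rfl (fun k hk => ?_), Finset.prod_const]
      · congr 1
      · rw [(Finset.mem_filter.mp hk).2]
    have h2 : ∏ k ∈ Finset.univ.filter (fun k => ¬ S k = 1), (-(S k)) = 1 := by
      apply Finset.prod_eq_one
      intro k hk
      rcases hS k with h | h
      · exact absurd h (Finset.mem_filter.mp hk).2
      · rw [h]; ring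
    rw [h1, h2, mul_one, Even.neg_one_pow heven]
  -- the key edge identity
  have hkey : ∀ k : Fin (m+3), S k * (f k * f (k+1)) = -1 := by
    intro k
    rcases Nat.lt_or_ge (k.val + 1) (m+3) with hlt | hge
    · have hv : (k+1).val = k.val + 1 :=
        Fin.val_add_one_of_lt (by rw [Fin.lt_iff_val_lt_val, Fin.val_last]; omega)
      have : f (k+1) = f k * (-(S k)) := by
        simp only [hfdef, hv, Finset.prod_range_succ, Fin.cast_val_eq_self]
      rw [this]
      nlinarith [hf2 k, hS2 k]
    · have hv : k.val = m + 2 := by have := k.isLt; omega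
      have hk1 : k + 1 = 0 := by
        have : k = Fin.last (m+2) := by apply Fin.ext; rw [hv, Fin.val_last]
        rw [this, Fin.last_add_one]
      have hf0 : f (k+1) = 1 := by rw [hk1]; simp [hfdef]
      have hall : ∏ j ∈ Finset.range (m+3), (-(S j)) = 1 := by
        rw [← hprodall, ← Fin.prod_univ_eq_prod_range (fun j : ℕ => -(S j)) (m+3)]
        exact Finset.prod_congr rfl fun j _ => by rw [Fin.cast_val_eq_self]
      have hck : ((m+2 : ℕ) : Fin (m+3)) = k := by
        apply Fin.ext
        rw [hv, Fin.val_natCast]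
        exact Nat.mod_eq_of_lt (by omega)
      have hsplit : f k * (-(S k)) = ∏ j ∈ Finset.range (m+3), (-(S j)) := by
        rw [Finset.prod_range_succ, hck]
        simp only [hfdef, hv]
      rw [hf0, mul_one]
      have := hsplit.trans hall
      nlinarith [this]
  -- the isotropic vector
  set e := Equiv.ofBijective c hc with hedef
  set z : Fin (m+3) → ℤ := fun i => f (e.symm i) with hzdef
  have hzc : ∀ k, z (c k) = f k := by
    intro k
    simp only [hzdef]
    congr 1
    exact e.symm_apply_apply k
  have hzne : z ≠ 0 := by
    intro h
    have h0 : z (c 0) = 0 := by rw [h]; rfl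
    rw [hzc 0] at h0
    have := hf2 0
    rw [h0] at this
    norm_num at this
  -- the sum of squares
  have hsq : (∑ i, z i ^ 2) = (m+3 : ℤ) := by
    have hz1 : ∀ i, z i ^ 2 = 1 := fun i => by rw [sq]; simp only [hzdef]; exact hf2 _
    rw [Finset.sum_congr rfl fun i _ => hz1 i]
    simp
  have hne2 : ∀ k : Fin (m+3), k + 1 ≠ k - 1 := by
    intro k h
    have h2 : (1 : Fin (m+3)) = -1 := by
      rw [sub_eq_add_neg] at h
      exact add_left_cancel h
    have h3 : (2 : Fin (m+3)) = 0 := by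
      have := congrArg (· + 1) h2
      simpa [one_add_one_eq_two] using this
    have h4 := congrArg Fin.val h3
    have h5 : ((2 : Fin (m+3)) : ℕ) = 2 % (m+3) := rfl
    simp [h5, Nat.mod_eq_of_lt] at h4
  -- inner sums reduce to two edge terms
  have hinner : ∀ k : Fin (m+3),
      (∑ l, a (c k) (c l) * (z (c k) * z (c l)))
        = -1 + S (k-1) * (f k * f (k-1)) := by
    intro k
    have hsupp : ∀ l ∈ (Finset.univ : Finset (Fin (m+3))), l ∉ ({k+1, k-1} : Finset (Fin (m+3))) →
        a (c k) (c l) * (z (c k) * z (c l)) = 0 := by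
      intro l _ hl
      simp only [Finset.mem_insert, Finset.mem_singleton, not_or] at hl
      have ha0 : a (c k) (c l) = 0 := by
        by_contra h0
        rcases (hcyc k l).mp h0 with h | h
        · exact hl.1 h
        · exact hl.2 (by rw [h]; rw [add_sub_cancel_right])
      rw [ha0, zero_mul]
    rw [← Finset.sum_subset (Finset.subset_univ ({k+1, k-1} : Finset (Fin (m+3)))) hsupp]
    rw [Finset.sum_pair (hne2 k)]
    congr 1
    · rw [hzc, hzc]
      exact hkey k
    · rw [hzc, hzc]
      have h1 : a (c k) (c (k-1)) = S (k-1) := by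
        rw [hsymm]
        simp only [hSdef]
        rw [sub_add_cancel]
      rw [h1]
  -- full double sum
  have hD : (∑ i, ∑ j, a i j * (z i * z j)) = -2 * (m+3 : ℤ) := by
    have step1 : (∑ i, ∑ j, a i j * (z i * z j))
        = ∑ k, ∑ l, a (c k) (c l) * (z (c k) * z (c l)) := by
      rw [← Equiv.sum_comp e (fun i => ∑ j, a i j * (z i * z j))]
      exact Finset.sum_congr rfl fun k _ =>
        (Equiv.sum_comp e (fun j => a (c k) j * (z (c k) * z j))).symm
    rw [step1, Finset.sum_congr rfl fun k _ => hinner k, Finset.sum_add_distrib]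
    have step2 : (∑ k : Fin (m+3), S (k-1) * (f k * f (k-1))) = ∑ k : Fin (m+3), (-1 : ℤ) := by
      rw [← Equiv.sum_comp (Equiv.addRight (1 : Fin (m+3)))
        (fun k => S (k-1) * (f k * f (k-1)))]
      apply Finset.sum_congr rfl
      intro k _
      have : (Equiv.addRight (1 : Fin (m+3))) k = k + 1 := rfl
      rw [this, add_sub_cancel_right]
      rw [mul_comm (f (k+1)) (f k)]
      exact hkey k
    rw [step2]
    simp
    ring
  -- the cross term equals half the double sum
  set T : ℤ := ∑ i, ∑ j, if i < j then a i j * (z i * z j) else 0 with hTdef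
  have hDT : (∑ i, ∑ j, a i j * (z i * z j)) = T + T := by
    have hsplitij : ∀ i j : Fin (m+3), a i j * (z i * z j)
        = (if i < j then a i j * (z i * z j) else 0)
          + (if j < i then a i j * (z i * z j) else 0) := by
      intro i j
      rcases lt_trichotomy i j with h | h | h
      · rw [if_pos h, if_neg (asymm h), add_zero]
      · rw [if_neg (lt_irrefl _ ∘ (h ▸ ·)), if_neg (lt_irrefl _ ∘ (h ▸ ·))]
        rw [h, hdiag, zero_mul, add_zero]
      · rw [if_neg (asymm h), if_pos h, zero_add]
    calc (∑ i, ∑ j, a i j * (z i * z j))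
        = ∑ i, ∑ j, ((if i < j then a i j * (z i * z j) else 0)
          + (if j < i then a i j * (z i * z j) else 0)) := by
          exact Finset.sum_congr rfl fun i _ => Finset.sum_congr rfl fun j _ => hsplitij i j
      _ = T + ∑ i, ∑ j, (if j < i then a i j * (z i * z j) else 0) := by
          rw [hTdef]
          rw [← Finset.sum_add_distrib]
          exact Finset.sum_congr rfl fun i _ => Finset.sum_add_distrib
      _ = T + T := by
          congr 1
          rw [Finset.sum_comm]
          rw [hTdef]
          apply Finset.sum_congr rfl
          intro i _
          apply Finset.sum_congr rfl
          intro j _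
          rw [hsymm j i, mul_comm (z j) (z i)]
  have hT : T = -(m+3 : ℤ) := by
    rw [hD] at hDT
    linarith
  have hq : sgnForm a z = 0 := by
    rw [sgnForm, ← hTdef, hsq, hT]
    ring
  constructor
  · intro h
    have := h z hzne
    rw [hq] at this
    exact lt_irrefl 0 this
  · exact ⟨z, hzne, hq⟩
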